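/- Let A be an n×d real matrix with singular value decomposition A = UΣVᵀ (U orthonormal columns), and let Π be an n×r real matrix satisfying ‖I − UᵀΠΠᵀU‖₂ ≤ ε. Define Ã = (AᵀΠΠᵀA)^{1/2} (the positive semidefinite square root). Then for all x ∈ ℝᵈ, (1−ε)‖Ax‖₂² ≤ ‖Ãx‖₂² ≤ (1+ε)‖Ax‖₂². -/

import Mathlib

open Matrix

/-- Squared Euclidean norm of a vector. -/
noncomputable def sqnorm2 {n : ℕ} (v : Fin n → ℝ) : ℝ := ∑ i, (v i) ^ 2

/-- Spectral (operator) norm of a real matrix. -/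
noncomputable def specNorm {m n : ℕ} (M : Matrix (Fin m) (Fin n) ℝ) : ℝ :=
  sSup {c | ∃ x : Fin n → ℝ, sqnorm2 x = 1 ∧ c = Real.sqrt (sqnorm2 (M.mulVec x))}

/-- The positive semidefinite square root of a positive semidefinite matrix
(the definition `Matrix.PosSemidef.sqrt` of the older Mathlib, since removed). -/
noncomputable def Matrix.PosSemidef.sqrt {n : Type*} [Fintype n] [DecidableEq n]
    {A : Matrix n n ℝ} (hA : A.PosSemidef) : Matrix n n ℝ :=
  hA.1.eigenvectorUnitary.1 * diagonal (Real.sqrt ∘ hA.1.eigenvalues) *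
  (star hA.1.eigenvectorUnitary : Matrix n n ℝ)

lemma sqnorm2_nonneg {n : ℕ} (v : Fin n → ℝ) : 0 ≤ sqnorm2 v :=
  Finset.sum_nonneg fun _ _ => sq_nonneg _

lemma sqnorm2_eq_dot {n : ℕ} (v : Fin n → ℝ) : sqnorm2 v = v ⬝ᵥ v := by
  simp [sqnorm2, dotProduct, sq]

lemma sqnorm2_smul {n : ℕ} (c : ℝ) (v : Fin n → ℝ) :
    sqnorm2 (c • v) = c ^ 2 * sqnorm2 v := by
  simp [sqnorm2, Finset.mul_sum, mul_pow]

lemma sqnorm2_mulVec_le {m n : ℕ} (M : Matrix (Fin m) (Fin n) ℝ) (x : Fin n → ℝ) :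
    sqnorm2 (M.mulVec x) ≤ (∑ i, ∑ j, (M i j) ^ 2) * sqnorm2 x := by
  unfold sqnorm2
  rw [Finset.sum_mul]
  refine Finset.sum_le_sum fun i _ => ?_
  simpa [mulVec, dotProduct] using
    Finset.sum_mul_sq_le_sq_mul_sq Finset.univ (fun j => M i j) x

lemma specNorm_bddAbove {m n : ℕ} (M : Matrix (Fin m) (Fin n) ℝ) :
    BddAbove {c | ∃ x : Fin n → ℝ, sqnorm2 x = 1 ∧ c = Real.sqrt (sqnorm2 (M.mulVec x))} := by
  refine ⟨Real.sqrt (∑ i, ∑ j, (M i j) ^ 2), ?_⟩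
  rintro c ⟨x, hx, rfl⟩
  refine Real.sqrt_le_sqrt ?_
  calc sqnorm2 (M.mulVec x) ≤ (∑ i, ∑ j, (M i j) ^ 2) * sqnorm2 x := sqnorm2_mulVec_le M x
    _ = ∑ i, ∑ j, (M i j) ^ 2 := by rw [hx, mul_one]

/-- key: quadratic form bound from spectral norm bound. -/
lemma quad_abs_le {n : ℕ} (M : Matrix (Fin n) (Fin n) ℝ) (ε : ℝ) (hε : 0 ≤ ε)
    (h : specNorm M ≤ ε) (y : Fin n → ℝ) :
    |y ⬝ᵥ M.mulVec y| ≤ ε * sqnorm2 y := by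
  rcases eq_or_ne (sqnorm2 y) 0 with h0 | h0
  · -- y = 0
    have hy : y = 0 := by
      funext i
      have := (Finset.sum_eq_zero_iff_of_nonneg (fun j _ => sq_nonneg (y j))).mp h0 i
        (Finset.mem_univ i)
      exact pow_eq_zero_iff (n := 2) (by norm_num) |>.mp this
    simp [hy, h0, sqnorm2]
  · have hpos : 0 < sqnorm2 y := lt_of_le_of_ne (sqnorm2_nonneg y) (Ne.symm h0)
    set c : ℝ := Real.sqrt (sqnorm2 y) with hc
    have hcpos : 0 < c := Real.sqrt_pos.mpr hpos
    set u : Fin n → ℝ := c⁻¹ • y with hu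
    have hunorm : sqnorm2 u = 1 := by
      rw [hu, sqnorm2_smul, inv_pow, Real.sq_sqrt hpos.le, inv_mul_cancel₀ h0]
    have hmem : Real.sqrt (sqnorm2 (M.mulVec u)) ≤ ε := by
      refine le_trans (le_csSup (specNorm_bddAbove M) ⟨u, hunorm, rfl⟩) h
    -- Cauchy-Schwarz: |u ⬝ᵥ M u| ≤ ‖u‖ ‖Mu‖ = ‖Mu‖
    have hcs : |u ⬝ᵥ M.mulVec u| ≤ Real.sqrt (sqnorm2 (M.mulVec u)) := by
      have := Finset.sum_mul_sq_le_sq_mul_sq Finset.univ u (M.mulVec u)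
      have h1 : (u ⬝ᵥ M.mulVec u) ^ 2 ≤ sqnorm2 u * sqnorm2 (M.mulVec u) := by
        simpa [dotProduct, sqnorm2] using this
      rw [hunorm, one_mul] at h1
      calc |u ⬝ᵥ M.mulVec u| = Real.sqrt ((u ⬝ᵥ M.mulVec u) ^ 2) := (Real.sqrt_sq_eq_abs _).symm
        _ ≤ Real.sqrt (sqnorm2 (M.mulVec u)) := Real.sqrt_le_sqrt h1
    have hkey : |u ⬝ᵥ M.mulVec u| ≤ ε := hcs.trans hmem
    have hyu : y = c • u := by
      rw [hu, smul_smul, mul_inv_cancel₀ (ne_of_gt hcpos), one_smul]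
    have hquad : y ⬝ᵥ M.mulVec y = c ^ 2 * (u ⬝ᵥ M.mulVec u) := by
      rw [hyu]
      simp [mulVec_smul, dotProduct_smul, smul_dotProduct, smul_smul, sq]
      ring
    rw [hquad, abs_mul, abs_of_nonneg (sq_nonneg c), hc, Real.sq_sqrt hpos.le]
    nlinarith [sqnorm2_nonneg y, abs_nonneg (u ⬝ᵥ M.mulVec u)]

/-- oblivious ℓ₂-subspace embedding into ℝ^d. -/
theorem stmt0 {n d r : ℕ} (ε : ℝ) (hε : 0 ≤ ε)
    (A U : Matrix (Fin n) (Fin d) ℝ) (S V : Matrix (Fin d) (Fin d) ℝ)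
    (σ : Fin d → ℝ) (hσ : ∀ i, 0 < σ i) (hS : S = Matrix.diagonal σ)
    (hU : Uᵀ * U = 1) (hV : Vᵀ * V = 1) (hA : A = U * S * Vᵀ)
    (Pi : Matrix (Fin n) (Fin r) ℝ)
    (hPi : specNorm ((1 : Matrix (Fin d) (Fin d) ℝ) - Uᵀ * Pi * Piᵀ * U) ≤ ε)
    (hPSD : (Aᵀ * Pi * Piᵀ * A).PosSemidef) :
    ∀ x : Fin d → ℝ,
      (1 - ε) * sqnorm2 (A.mulVec x) ≤ sqnorm2 (hPSD.sqrt.mulVec x) ∧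
      sqnorm2 (hPSD.sqrt.mulVec x) ≤ (1 + ε) * sqnorm2 (A.mulVec x) := by
  intro x
  set M : Matrix (Fin d) (Fin d) ℝ := (1 : Matrix (Fin d) (Fin d) ℝ) - Uᵀ * Pi * Piᵀ * U with hM
  set y : Fin d → ℝ := (S * Vᵀ).mulVec x with hy
  -- ‖Ax‖² = ‖y‖²
  have hAx : A.mulVec x = U.mulVec y := by
    rw [hA, hy, Matrix.mul_assoc, ← mulVec_mulVec]
  have h1 : sqnorm2 (A.mulVec x) = sqnorm2 y := by
    rw [hAx, sqnorm2_eq_dot, sqnorm2_eq_dot, dotProduct_mulVec, ← mulVec_transpose,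
      mulVec_mulVec, hU, one_mulVec]
  -- ‖Ãx‖² = x ⬝ B x with B = AᵀΠΠᵀA
  have hsq : hPSD.sqrt * hPSD.sqrt = Aᵀ * Pi * Piᵀ * A := by
    have hs := hPSD.1.spectral_theorem
    have hu : (star hPSD.1.eigenvectorUnitary : Matrix (Fin d) (Fin d) ℝ) * hPSD.1.eigenvectorUnitary.1 = 1 :=
      Unitary.coe_star_mul_self _
    have hd : diagonal (Real.sqrt ∘ hPSD.1.eigenvalues) * diagonal (Real.sqrt ∘ hPSD.1.eigenvalues)
        = diagonal (RCLike.ofReal ∘ hPSD.1.eigenvalues) := by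
      rw [diagonal_mul_diagonal]; congr 1; funext i
      simp [Real.mul_self_sqrt (hPSD.eigenvalues_nonneg i)]
    conv_rhs => rw [hs]
    simp only [Matrix.PosSemidef.sqrt, Unitary.conjStarAlgAut_apply]
    calc _ = hPSD.1.eigenvectorUnitary.1 * (diagonal (Real.sqrt ∘ hPSD.1.eigenvalues) *
        ((star hPSD.1.eigenvectorUnitary : Matrix (Fin d) (Fin d) ℝ) * hPSD.1.eigenvectorUnitary.1) *
        diagonal (Real.sqrt ∘ hPSD.1.eigenvalues)) * (star hPSD.1.eigenvectorUnitary : Matrix (Fin d) (Fin d) ℝ) := by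
          simp only [Matrix.mul_assoc]
      _ = _ := by rw [hu, Matrix.mul_one, hd]
  have hherm : hPSD.sqrtᵀ = hPSD.sqrt := by
    simp [Matrix.PosSemidef.sqrt, Matrix.transpose_mul, Matrix.mul_assoc, star_eq_conjTranspose]
  have h2 : sqnorm2 (hPSD.sqrt.mulVec x) = x ⬝ᵥ (Aᵀ * Pi * Piᵀ * A).mulVec x := by
    rw [sqnorm2_eq_dot, dotProduct_mulVec, ← mulVec_transpose, hherm, mulVec_mulVec, hsq,
      dotProduct_comm]
  -- x ⬝ B x = y ⬝ y − y ⬝ M y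
  have h3 : x ⬝ᵥ (Aᵀ * Pi * Piᵀ * A).mulVec x = y ⬝ᵥ y - y ⬝ᵥ M.mulVec y := by
    have hB : Aᵀ * Pi * Piᵀ * A = (S * Vᵀ)ᵀ * (Uᵀ * Pi * Piᵀ * U) * (S * Vᵀ) := by
      rw [hA]
      simp [Matrix.mul_assoc]
    rw [hB, hy, hM]
    have : ((S * Vᵀ)ᵀ * (Uᵀ * Pi * Piᵀ * U) * (S * Vᵀ)).mulVec x
        = (S * Vᵀ)ᵀ.mulVec ((Uᵀ * Pi * Piᵀ * U).mulVec ((S * Vᵀ).mulVec x)) := by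
      simp [← mulVec_mulVec]
    rw [this, dotProduct_mulVec, ← mulVec_transpose, transpose_transpose]
    simp [Matrix.sub_mul, sub_mulVec, dotProduct_sub, Matrix.one_mul]
  have habs := quad_abs_le M ε hε hPi y
  have hlo : -(ε * sqnorm2 y) ≤ y ⬝ᵥ M.mulVec y := neg_le_of_abs_le habs
  have hhi : y ⬝ᵥ M.mulVec y ≤ ε * sqnorm2 y := le_of_abs_le habs
  rw [h1, h2, h3, ← sqnorm2_eq_dot]
  constructor <;> nlinarith [sqnorm2_nonneg y]
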